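/- Let n ≥ 1, let p^0, p^1, …, p^n ∈ Δ with p^i_i > 0 for each i, and let τ satisfy 0 < τ < p^i_i for all i. Define φ(p^i) ∈ ℝ^{n+1} by φ(p^i)_j = p^i_j − τ if j = i and φ(p^i)_j = p^i_j + τ/n if j ≠ i; for barycentric weights λ with λ_i ≥ 0 and Σ λ_i = 1, set r(λ) = Σ λ_i p^i and Φ(λ) = Σ λ_i φ(p^i). If (λ(m))_{m≥1} and (λ'(m))_{m≥1} are sequences of barycentric weights such that |Φ(λ(m)) − r(λ(m))| → 0 and |Φ(λ'(m)) − r(λ'(m))| → 0 as m → ∞, then λ(m)_i → 1/(n+1) and λ'(m)_i → 1/(n+1) for every i, and consequently |r(λ(m)) − r(λ'(m))| → 0. -/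

import Mathlib

open Filter Topology

noncomputable section

/-- The ambient Euclidean space `ℝ^{n+1}`. -/
abbrev E (n : ℕ) := EuclideanSpace ℝ (Fin (n + 1))

/-- The standard `n`-dimensional simplex in `ℝ^{n+1}` with the Euclidean metric. -/
def simplexE (n : ℕ) : Set (E n) := {p | (∀ i, 0 ≤ p i) ∧ ∑ i, p i = 1}

lemma coord_dist_le {n : ℕ} (x y : E n) (i : Fin (n + 1)) :
    dist (x i) (y i) ≤ dist x y := by
  rw [EuclideanSpace.dist_eq]
  have h : dist (x i) (y i) ^ 2 ≤ ∑ j, dist (x j) (y j) ^ 2 :=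
    Finset.single_le_sum (f := fun j => dist (x j) (y j) ^ 2)
      (fun j _ => sq_nonneg _) (Finset.mem_univ i)
  calc dist (x i) (y i) = Real.sqrt (dist (x i) (y i) ^ 2) := (Real.sqrt_sq dist_nonneg).symm
    _ ≤ _ := Real.sqrt_le_sqrt h

lemma lam_tendsto (n : ℕ) (hn : 1 ≤ n)
    (P : Fin (n + 1) → E n)
    (τ : ℝ) (hτ0 : 0 < τ)
    (φP : Fin (n + 1) → E n)
    (hφP : ∀ i j, φP i j = if j = i then P i j - τ else P i j + τ / (n : ℝ))
    (lam : ℕ → Fin (n + 1) → ℝ)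
    (hlam1 : ∀ m, ∑ i, lam m i = 1)
    (hconv : Tendsto
      (fun m => dist (∑ i, lam m i • φP i) (∑ i, lam m i • P i)) atTop (nhds 0)) :
    ∀ i, Tendsto (fun m => lam m i) atTop (nhds (1 / ((n : ℝ) + 1))) := by
  have hn0 : (n : ℝ) ≠ 0 := Nat.cast_ne_zero.mpr (by omega)
  intro i
  set f : ℕ → ℝ := fun m => (∑ j, lam m j • φP j) i - (∑ j, lam m j • P j) i with hf
  have hfval : ∀ m, f m = τ / n - τ * ((n : ℝ) + 1) / n * lam m i := by
    intro m
    have hA : (∑ j, lam m j • φP j) i = ∑ j, lam m j * φP j i := by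
      rw [WithLp.ofLp_sum, Finset.sum_apply]; rfl
    have hB : (∑ j, lam m j • P j) i = ∑ j, lam m j * P j i := by
      rw [WithLp.ofLp_sum, Finset.sum_apply]; rfl
    have : f m = ∑ j, lam m j * (φP j i - P j i) := by
      simp [hf, hA, hB, mul_sub, Finset.sum_sub_distrib]
    rw [this]
    have hterm : ∀ j, lam m j * (φP j i - P j i)
        = lam m j * (τ / n) + (if j = i then lam m i * (-τ - τ / n) else 0) := by
      intro j
      rcases eq_or_ne j i with rfl | hne
      · rw [hφP]; simp; ring
      · rw [hφP]
        have : i ≠ j := Ne.symm hne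
        simp [this, hne]
    simp only [hterm, Finset.sum_add_distrib, Finset.sum_ite_eq', Finset.mem_univ, if_true,
      ← Finset.sum_mul, hlam1 m]
    field_simp
    ring
  have hftends : Tendsto f atTop (nhds 0) := by
    apply squeeze_zero_norm _ hconv
    intro m
    simpa [Real.dist_eq, hf] using coord_dist_le (∑ j, lam m j • φP j) (∑ j, lam m j • P j) i
  have hne : τ * ((n : ℝ) + 1) / n ≠ 0 := by positivity
  have : Tendsto (fun m => (τ / n - f m) / (τ * ((n : ℝ) + 1) / n)) atTop
      (nhds ((τ / n - 0) / (τ * ((n : ℝ) + 1) / n))) :=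
    (tendsto_const_nhds.sub hftends).div_const _
  have heq : (fun m => (τ / n - f m) / (τ * ((n : ℝ) + 1) / n)) = fun m => lam m i := by
    funext m
    rw [hfval m]
    field_simp
    ring
  rw [heq] at this
  have hval : (τ / n - 0) / (τ * ((n : ℝ) + 1) / n) = 1 / ((n : ℝ) + 1) := by
    field_simp
    ring
  rwa [hval] at this

theorem fully_labeled_sequential (n : ℕ) (hn : 1 ≤ n)
    (P : Fin (n + 1) → E n) (hP : ∀ i, P i ∈ simplexE n)
    (hPd : ∀ i, 0 < P i i)
    (τ : ℝ) (hτ0 : 0 < τ) (hτ : ∀ i, τ < P i i)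
    (φP : Fin (n + 1) → E n)
    (hφP : ∀ i j, φP i j = if j = i then P i j - τ else P i j + τ / (n : ℝ))
    (lam lam' : ℕ → Fin (n + 1) → ℝ)
    (hlam0 : ∀ m i, 0 ≤ lam m i) (hlam1 : ∀ m, ∑ i, lam m i = 1)
    (hlam'0 : ∀ m i, 0 ≤ lam' m i) (hlam'1 : ∀ m, ∑ i, lam' m i = 1)
    (hconv : Tendsto
      (fun m => dist (∑ i, lam m i • φP i) (∑ i, lam m i • P i)) atTop (nhds 0))
    (hconv' : Tendsto
      (fun m => dist (∑ i, lam' m i • φP i) (∑ i, lam' m i • P i)) atTop (nhds 0)) :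
    (∀ i, Tendsto (fun m => lam m i) atTop (nhds (1 / ((n : ℝ) + 1)))) ∧
    (∀ i, Tendsto (fun m => lam' m i) atTop (nhds (1 / ((n : ℝ) + 1)))) ∧
    Tendsto (fun m => dist (∑ i, lam m i • P i) (∑ i, lam' m i • P i)) atTop (nhds 0) := by
  have h1 := lam_tendsto n hn P τ hτ0 φP hφP lam hlam1 hconv
  have h2 := lam_tendsto n hn P τ hτ0 φP hφP lam' hlam'1 hconv'
  refine ⟨h1, h2, ?_⟩
  have hs : Tendsto (fun m => ∑ i, lam m i • P i) atTop
      (nhds (∑ i, (1 / ((n : ℝ) + 1)) • P i)) :=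
    tendsto_finset_sum _ fun i _ => (h1 i).smul tendsto_const_nhds
  have hs' : Tendsto (fun m => ∑ i, lam' m i • P i) atTop
      (nhds (∑ i, (1 / ((n : ℝ) + 1)) • P i)) :=
    tendsto_finset_sum _ fun i _ => (h2 i).smul tendsto_const_nhds
  simpa using hs.dist hs'
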